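/- arXiv:2305.17822 — 3 statements merged into one kernel-verified Lean document; each statement's English description precedes it below -/
import Mathlib

section
/- For any hypergraph G = (V, E) and any λ, the independence polynomial of S_G satisfies Z_{S_G}(λ) = Σ_{S ⊆ V} λ^{|V| - |S|} (1 + λ)^{e(S)}, where e(S) is the number of edges of G containing at least one vertex of S. -/
/-- The edge set of `S_G`: for a hypergraph with edges `E : Finset (Finset V)`,
`S_G` has vertex set `V ⊕ Finset V` and edges `e ∪ {e}` for `e ∈ E`. -/
def SGedges {V : Type*} [DecidableEq V] (E : Finset (Finset V)) :
    Finset (Finset (V ⊕ Finset V)) :=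
  E.image (fun e => e.image Sum.inl ∪ {Sum.inr e})

/-- The vertex set of `S_G`: all of `V` together with (the names of) the edges of `G`. -/
def SGverts {V : Type*} [Fintype V] [DecidableEq V] (E : Finset (Finset V)) :
    Finset (V ⊕ Finset V) :=
  Finset.univ.image Sum.inl ∪ E.image Sum.inr

open Finset Sum

lemma sum_pow_powerset {α : Type*} [DecidableEq α] (s : Finset α) (lam : ℝ) :
    ∑ B ∈ s.powerset, lam ^ B.card = (1 + lam) ^ s.card := by
  have := Finset.prod_add (fun _ : α => lam) (fun _ => (1:ℝ)) s
  simp only [Finset.prod_const, Finset.prod_const_one, mul_one, Finset.prod_const] at this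
  rw [add_comm] at this
  simpa using this.symm

/-- `Z_{S_G}(λ) = Σ_{S ⊆ V} λ^{|V|-|S|} (1+λ)^{e(S)}`, where `e(S)` counts the edges of `G`
meeting `S`. -/
theorem stmt_3 {V : Type*} [Fintype V] [DecidableEq V] (E : Finset (Finset V)) (lam : ℝ) :
    ∑ I ∈ (SGverts E).powerset.filter (fun I => ∀ f ∈ SGedges E, ¬ f ⊆ I), lam ^ I.card
      = ∑ S ∈ (Finset.univ : Finset V).powerset,
          lam ^ (Fintype.card V - S.card) *
            (1 + lam) ^ (E.filter (fun e => (e ∩ S).Nonempty)).card := by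
  classical
  have key : ∑ I ∈ (SGverts E).powerset.filter (fun I => ∀ f ∈ SGedges E, ¬ f ⊆ I), lam ^ I.card
      = ∑ p ∈ (Finset.univ : Finset V).powerset.sigma
          (fun A => (E.filter (fun e => ¬ e ⊆ A)).powerset),
          lam ^ (p.1.card + p.2.card) := by
    apply Finset.sum_nbij' (fun I => (⟨I.toLeft, I.toRight⟩ : Σ _ : Finset V, Finset (Finset V)))
      (fun p => p.1.disjSum p.2)
    · intro I hI
      simp only [mem_filter, mem_powerset] at hI
      obtain ⟨hsub, hedge⟩ := hI
      simp only [mem_sigma, mem_powerset]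
      refine ⟨subset_univ _, ?_⟩
      intro e he
      rw [Finset.mem_toRight] at he
      have heE : e ∈ E := by
        have := hsub he
        simp only [SGverts, mem_union, mem_image] at this
        rcases this with ⟨a, _, h⟩ | ⟨a, ha, h⟩
        · exact absurd h (by simp)
        · rw [Sum.inr.injEq] at h; exact h ▸ ha
      rw [mem_filter]
      refine ⟨heE, ?_⟩
      intro hsubA
      apply hedge (e.image Sum.inl ∪ {Sum.inr e})
      · exact Finset.mem_image_of_mem _ heE
      · intro x hx
        simp only [mem_union, mem_image, mem_singleton] at hx
        rcases hx with ⟨v, hv, rfl⟩ | rfl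
        · have : v ∈ I.toLeft := hsubA hv
          rwa [Finset.mem_toLeft] at this
        · exact he
    · intro p hp
      simp only [mem_sigma, mem_powerset] at hp
      obtain ⟨hA, hB⟩ := hp
      simp only [mem_filter, mem_powerset]
      constructor
      · intro x hx
        rw [Finset.mem_disjSum] at hx
        simp only [SGverts, mem_union, mem_image]
        rcases hx with ⟨a, _, rfl⟩ | ⟨b, hb, rfl⟩
        · exact Or.inl ⟨a, mem_univ a, rfl⟩
        · exact Or.inr ⟨b, (Finset.mem_filter.mp (hB hb)).1, rfl⟩
      · intro f hf hfsub
        simp only [SGedges, mem_image] at hf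
        obtain ⟨e, heE, rfl⟩ := hf
        have hinr : Sum.inr e ∈ p.1.disjSum p.2 :=
          hfsub (by simp)
        rw [Finset.inr_mem_disjSum] at hinr
        have : ¬ e ⊆ p.1 := (Finset.mem_filter.mp (hB hinr)).2
        apply this
        intro v hv
        have : Sum.inl v ∈ p.1.disjSum p.2 := hfsub (by simp [hv])
        rwa [Finset.inl_mem_disjSum] at this
    · intro I _; exact Finset.toLeft_disjSum_toRight
    · intro p _; simp
    · intro I _
      rw [Finset.card_toLeft_add_card_toRight]
  rw [key, Finset.sum_sigma]
  have lhs : ∀ A : Finset V,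
      ∑ B ∈ (E.filter (fun e => ¬ e ⊆ A)).powerset, lam ^ (A.card + B.card)
        = lam ^ A.card * (1 + lam) ^ (E.filter (fun e => ¬ e ⊆ A)).card := by
    intro A
    simp_rw [pow_add, ← Finset.mul_sum, sum_pow_powerset]
  simp_rw [lhs]
  -- reindex RHS by complement
  apply Finset.sum_nbij' (fun A : Finset V => Aᶜ) (fun S : Finset V => Sᶜ)
  · intro A _; exact mem_powerset.mpr (subset_univ _)
  · intro S _; exact mem_powerset.mpr (subset_univ _)
  · intro A _; simp
  · intro S _; simp
  · intro A _
    congr 1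
    · congr 1
      rw [Finset.card_compl]
      have : A.card ≤ Fintype.card V := Finset.card_le_univ A
      omega
    · congr 1
      congr 1
      apply Finset.filter_congr
      intro e _
      constructor
      · intro h
        obtain ⟨x, hx⟩ : ∃ x ∈ e, x ∉ A := by
          by_contra hc
          push_neg at hc
          exact h hc
        exact ⟨x, Finset.mem_inter.mpr ⟨hx.1, Finset.mem_compl.mpr hx.2⟩⟩
      · rintro ⟨x, hx⟩ hsub
        rw [Finset.mem_inter, Finset.mem_compl] at hx
        exact hx.2 (hsub hx.1)
end

section
/- Let n ≥ 2, α a real with 3 log n ≤ α ≤ n, and λ₀ = -3 log n / α. Suppose G = (V, E) is a hypergraph on n vertices with e(S) ≥ α|S| for all S ⊆ V. Then |Σ_{∅ ≠ S ⊆ V} λ₀^{-|S|} (1 + λ₀)^{e(S)}| < 1. -/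
/-- Let `n ≥ 2`, `3 log n ≤ α ≤ n`, `λ₀ = -3 log n / α`. If `G` is a hypergraph on `n`
vertices with `e(S) ≥ α|S|` for all vertex subsets `S`, then
`|Σ_{∅ ≠ S ⊆ V} λ₀^{-|S|} (1+λ₀)^{e(S)}| < 1`. -/
theorem stmt_6 {V : Type*} [Fintype V] [DecidableEq V] (E : Finset (Finset V))
    (n : ℕ) (hn : n = Fintype.card V) (hn2 : 2 ≤ n)
    (α : ℝ) (hα₁ : 3 * Real.log n ≤ α) (hα₂ : α ≤ n)
    (lam₀ : ℝ) (hlam₀ : lam₀ = -(3 * Real.log n) / α)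
    (hdense : ∀ S : Finset V, α * S.card ≤ (E.filter (fun e => (e ∩ S).Nonempty)).card) :
    |∑ S ∈ (Finset.univ : Finset V).powerset.filter (fun S => S ≠ ∅),
        lam₀ ^ (-(S.card : ℤ)) *
          (1 + lam₀) ^ (E.filter (fun e => (e ∩ S).Nonempty)).card| < 1 := by
  have hn2' : (2:ℝ) ≤ n := by exact_mod_cast hn2
  have hnpos : (0:ℝ) < n := by linarith
  have hlog2 : (0.6931471803:ℝ) < Real.log 2 := Real.log_two_gt_d9
  have hlogn : Real.log 2 ≤ Real.log n := Real.log_le_log (by norm_num) hn2'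
  have hL : (1:ℝ) < 3 * Real.log n := by linarith
  have hα0 : (0:ℝ) < α := by linarith
  have hlam_neg : lam₀ < 0 := by
    rw [hlam₀]; exact div_neg_of_neg_of_pos (by linarith) hα0
  have hlam_ge : -1 ≤ lam₀ := by
    rw [hlam₀, neg_div, neg_le_neg_iff, div_le_one hα0]; exact hα₁
  have h10 : (0:ℝ) ≤ 1 + lam₀ := by linarith
  have hlamα : lam₀ * α = -(3 * Real.log n) := by
    rw [hlam₀, div_mul_cancel₀ _ (ne_of_gt hα0)]
  have habslam : |lam₀| = 3 * Real.log n / α := by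
    rw [abs_of_neg hlam_neg, hlam₀, neg_div, neg_neg]
  -- bound each term
  have hterm : ∀ S : Finset V, S ≠ ∅ →
      |lam₀ ^ (-(S.card : ℤ)) *
        (1 + lam₀) ^ (E.filter (fun e => (e ∩ S).Nonempty)).card|
      ≤ (((n:ℝ)^2)⁻¹) ^ S.card := by
    intro S _
    set k := S.card
    set m := (E.filter (fun e => (e ∩ S).Nonempty)).card
    have hm : α * k ≤ m := hdense S
    have h1 : |lam₀ ^ (-(k : ℤ)) * (1 + lam₀) ^ m|
        = (α / (3 * Real.log n)) ^ k * (1 + lam₀) ^ m := by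
      rw [abs_mul, abs_pow, abs_of_nonneg h10, zpow_neg, zpow_natCast, abs_inv,
        abs_pow, habslam, ← inv_pow, inv_div]
    rw [h1]
    have h2 : (1 + lam₀) ^ m ≤ (((n:ℝ)^3)⁻¹) ^ k := by
      calc (1 + lam₀) ^ m ≤ (Real.exp lam₀) ^ m :=
            pow_le_pow_left₀ h10 (by linarith [Real.add_one_le_exp lam₀]) m
        _ = Real.exp (lam₀ * m) := by rw [← Real.exp_nat_mul, mul_comm]
        _ ≤ Real.exp (lam₀ * (α * k)) := by
            apply Real.exp_le_exp.2
            exact mul_le_mul_of_nonpos_left hm (le_of_lt hlam_neg)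
        _ = (((n:ℝ)^3)⁻¹) ^ k := by
            rw [← mul_assoc, hlamα]
            rw [show -(3 * Real.log n) * (k:ℝ) = (k:ℝ) * -(3 * Real.log n) by ring,
              Real.exp_nat_mul, Real.exp_neg]
            congr 1
            rw [show (3:ℝ) * Real.log n = (3:ℕ) * Real.log n by norm_num,
              Real.exp_nat_mul, Real.exp_log hnpos]
    calc (α / (3 * Real.log n)) ^ k * (1 + lam₀) ^ m
        ≤ (α / (3 * Real.log n)) ^ k * (((n:ℝ)^3)⁻¹) ^ k := by
          apply mul_le_mul_of_nonneg_left h2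
          positivity
      _ = (α / (3 * Real.log n) * ((n:ℝ)^3)⁻¹) ^ k := by rw [mul_pow]
      _ ≤ (((n:ℝ)^2)⁻¹) ^ k := by
          apply pow_le_pow_left₀ (by positivity)
          have h3 : α / (3 * Real.log n) ≤ n := by
            rw [div_le_iff₀ (by linarith)]
            nlinarith
          calc α / (3 * Real.log n) * ((n:ℝ)^3)⁻¹ ≤ n * ((n:ℝ)^3)⁻¹ := by
                apply mul_le_mul_of_nonneg_right h3; positivity
            _ = ((n:ℝ)^2)⁻¹ := by field_simp
  -- sum bound
  have habs := Finset.abs_sum_le_sum_abs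
    (fun S => lam₀ ^ (-(S.card : ℤ)) *
        (1 + lam₀) ^ (E.filter (fun e => (e ∩ S).Nonempty)).card)
    ((Finset.univ : Finset V).powerset.filter (fun S => S ≠ ∅))
  have hsum1 : ∑ S ∈ (Finset.univ : Finset V).powerset.filter (fun S => S ≠ ∅),
      |lam₀ ^ (-(S.card : ℤ)) *
        (1 + lam₀) ^ (E.filter (fun e => (e ∩ S).Nonempty)).card|
      ≤ ∑ S ∈ (Finset.univ : Finset V).powerset.filter (fun S => S ≠ ∅),
        (((n:ℝ)^2)⁻¹) ^ S.card := by
    apply Finset.sum_le_sum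
    intro S hS
    exact hterm S (Finset.mem_filter.1 hS).2
  -- the powerset sum identity
  have hpow : ∑ S ∈ (Finset.univ : Finset V).powerset,
      (((n:ℝ)^2)⁻¹) ^ S.card = (((n:ℝ)^2)⁻¹ + 1) ^ n := by
    have := Finset.prod_add (fun _ : V => ((n:ℝ)^2)⁻¹) (fun _ : V => (1:ℝ))
      Finset.univ
    simp only [Finset.prod_const, Finset.prod_const_one, mul_one, one_pow] at this
    rw [← this, Finset.card_univ, ← hn]
  have hfilter : (Finset.univ : Finset V).powerset.filter (fun S => S ≠ ∅)
      = (Finset.univ : Finset V).powerset.erase ∅ := by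
    ext S
    simp [Finset.mem_erase, Finset.mem_filter, and_comm]
  have hsum2 : ∑ S ∈ (Finset.univ : Finset V).powerset.filter (fun S => S ≠ ∅),
      (((n:ℝ)^2)⁻¹) ^ S.card = (((n:ℝ)^2)⁻¹ + 1) ^ n - 1 := by
    rw [hfilter, ← hpow]
    have hmem : (∅ : Finset V) ∈ (Finset.univ : Finset V).powerset := by simp
    rw [← Finset.add_sum_erase _ _ hmem]
    simp
  -- final numeric bound
  have hfin : (((n:ℝ)^2)⁻¹ + 1) ^ n - 1 < 1 := by
    have hx : ((n:ℝ)^2)⁻¹ + 1 ≤ Real.exp (((n:ℝ)^2)⁻¹) := by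
      have := Real.add_one_le_exp (((n:ℝ)^2)⁻¹); linarith
    have h4 : (((n:ℝ)^2)⁻¹ + 1) ^ n ≤ Real.exp ((n:ℝ) * ((n:ℝ)^2)⁻¹) := by
      calc (((n:ℝ)^2)⁻¹ + 1) ^ n ≤ (Real.exp (((n:ℝ)^2)⁻¹)) ^ n :=
            pow_le_pow_left₀ (by positivity) hx n
        _ = Real.exp ((n:ℝ) * ((n:ℝ)^2)⁻¹) := (Real.exp_nat_mul _ n).symm
    have h5 : (n:ℝ) * ((n:ℝ)^2)⁻¹ ≤ 1/2 := by
      rw [show ((n:ℝ)^2) = n * n by ring, mul_inv, ← mul_assoc,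
        mul_inv_cancel₀ (ne_of_gt hnpos), one_mul]
      rw [inv_le_comm₀ (by linarith) (by norm_num)]
      norm_num; linarith
    have h6 : Real.exp ((n:ℝ) * ((n:ℝ)^2)⁻¹) ≤ Real.exp (1/2) :=
      Real.exp_le_exp.2 h5
    have h7 : Real.exp (1/2) < 2 := by
      have he : Real.exp (1/2) ^ 2 = Real.exp 1 := by
        rw [← Real.exp_nat_mul]; norm_num
      have h1 := Real.exp_one_lt_d9
      nlinarith [Real.exp_pos (1/2:ℝ)]
    linarith
  calc |∑ S ∈ (Finset.univ : Finset V).powerset.filter (fun S => S ≠ ∅),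
        lam₀ ^ (-(S.card : ℤ)) *
          (1 + lam₀) ^ (E.filter (fun e => (e ∩ S).Nonempty)).card|
      ≤ ∑ S ∈ (Finset.univ : Finset V).powerset.filter (fun S => S ≠ ∅),
        (((n:ℝ)^2)⁻¹) ^ S.card := le_trans habs hsum1
    _ = (((n:ℝ)^2)⁻¹ + 1) ^ n - 1 := hsum2
    _ < 1 := hfin
end

section
/- For each k ≥ 2 and Δ ≥ k, there exists a k-uniform, Δ-regular linear hypergraph on at most 2kΔ vertices. -/
namespace Stmt9Aux

variable (p k : ℕ) [Fact p.Prime]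

def edge (a d : ZMod p) : Finset (Fin k × ZMod p) :=
  Finset.univ.image (fun i : Fin k => (i, a + ((i : ℕ) : ZMod p) * d))

lemma mem_edge {a d : ZMod p} {v : Fin k × ZMod p} :
    v ∈ edge p k a d ↔ v.2 = a + ((v.1 : ℕ) : ZMod p) * d := by
  simp only [edge, Finset.mem_image, Finset.mem_univ, true_and, Prod.ext_iff]
  constructor
  · rintro ⟨i, hi, hv⟩
    subst hi
    exact hv.symm
  · intro h
    exact ⟨v.1, rfl, h.symm⟩

lemma card_edge (a d : ZMod p) : (edge p k a d).card = k := by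
  rw [edge, Finset.card_image_of_injective _ (fun i j h => congrArg Prod.fst h),
    Finset.card_univ, Fintype.card_fin]

lemma cast_fin_inj (hkp : k ≤ p) {i j : Fin k}
    (h : ((i : ℕ) : ZMod p) = ((j : ℕ) : ZMod p)) : i = j := by
  haveI : NeZero p := ⟨(Fact.out : p.Prime).pos.ne'⟩
  have := congrArg ZMod.val h
  rw [ZMod.val_natCast_of_lt (lt_of_lt_of_le i.2 hkp),
    ZMod.val_natCast_of_lt (lt_of_lt_of_le j.2 hkp)] at this
  exact Fin.ext this

lemma edge_inj (hk2 : 2 ≤ k) {a a' d d' : ZMod p}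
    (h : edge p k a d = edge p k a' d') : a = a' ∧ d = d' := by
  have h0 : ((⟨0, by omega⟩ : Fin k), a) ∈ edge p k a' d' := by
    rw [← h, mem_edge]; simp
  have h1 : ((⟨1, by omega⟩ : Fin k), a + d) ∈ edge p k a' d' := by
    rw [← h, mem_edge]; simp
  rw [mem_edge] at h0 h1
  simp only [Fin.val_mk, Nat.cast_zero, Nat.cast_one, zero_mul, add_zero, one_mul] at h0 h1
  subst h0
  exact ⟨rfl, add_left_cancel h1⟩

lemma edge_params_eq (hkp : k ≤ p) {a a' d d' : ZMod p}
    (u v : Fin k × ZMod p) (huv : u ≠ v)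
    (hu1 : u ∈ edge p k a d) (hu2 : u ∈ edge p k a' d')
    (hv1 : v ∈ edge p k a d) (hv2 : v ∈ edge p k a' d') :
    a = a' ∧ d = d' := by
  rw [mem_edge] at hu1 hu2 hv1 hv2
  have hne : u.1 ≠ v.1 := by
    intro h
    apply huv
    have : u.2 = v.2 := by rw [hu1, hv1, h]
    exact Prod.ext h this
  have hcast : ((u.1 : ℕ) : ZMod p) - ((v.1 : ℕ) : ZMod p) ≠ 0 := by
    intro h
    exact hne (cast_fin_inj p k hkp (sub_eq_zero.mp h))
  have h1 : a + ((u.1 : ℕ) : ZMod p) * d = a' + ((u.1 : ℕ) : ZMod p) * d' := by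
    rw [← hu1, ← hu2]
  have h2 : a + ((v.1 : ℕ) : ZMod p) * d = a' + ((v.1 : ℕ) : ZMod p) * d' := by
    rw [← hv1, ← hv2]
  have key : (((u.1 : ℕ) : ZMod p) - ((v.1 : ℕ) : ZMod p)) * (d - d') = 0 := by
    linear_combination h1 - h2
  have hd : d = d' := by
    rcases mul_eq_zero.mp key with h | h
    · exact absurd h hcast
    · exact sub_eq_zero.mp h
  subst hd
  exact ⟨add_right_cancel h1, rfl⟩

end Stmt9Aux

/-- For each `k ≥ 2` and `Δ ≥ k`, there exists a `k`-uniform, `Δ`-regular linear hypergraph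
on at most `2kΔ` vertices. -/
theorem stmt_9 (k Δ : ℕ) (hk : 2 ≤ k) (hΔ : k ≤ Δ) :
    ∃ (n : ℕ) (E : Finset (Finset (Fin n))),
      n ≤ 2 * k * Δ ∧
      (∀ e ∈ E, e.card = k) ∧
      (∀ v : Fin n, (E.filter (fun e => v ∈ e)).card = Δ) ∧
      (∀ e₁ ∈ E, ∀ e₂ ∈ E, e₁ ≠ e₂ → (e₁ ∩ e₂).card ≤ 1) := by
  have hΔ0 : Δ ≠ 0 := by omega
  obtain ⟨p, hp, hΔp, hp2⟩ := Nat.exists_prime_lt_and_le_two_mul Δ hΔ0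
  haveI : Fact p.Prime := ⟨hp⟩
  have hkp : k ≤ p := by omega
  -- the hypergraph on `Fin k × ZMod p`
  set E0 : Finset (Finset (Fin k × ZMod p)) :=
    (Finset.univ : Finset (ZMod p × Fin Δ)).image
      (fun q => Stmt9Aux.edge p k q.1 ((((q.2 : ℕ) + 1 : ℕ)) : ZMod p)) with hE0
  have mem_E0 : ∀ e, e ∈ E0 ↔
      ∃ (a : ZMod p) (d : Fin Δ), e = Stmt9Aux.edge p k a ((((d : ℕ) + 1 : ℕ)) : ZMod p) := by
    intro e
    simp only [hE0, Finset.mem_image, Finset.mem_univ, true_and, Prod.exists]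
    constructor
    · rintro ⟨a, d, rfl⟩; exact ⟨a, d, rfl⟩
    · rintro ⟨a, d, rfl⟩; exact ⟨a, d, rfl⟩
  -- uniform
  have hunif : ∀ e ∈ E0, e.card = k := by
    intro e he
    obtain ⟨a, d, rfl⟩ := (mem_E0 e).mp he
    exact Stmt9Aux.card_edge p k _ _
  -- regular
  have hreg : ∀ v : Fin k × ZMod p, (E0.filter (fun e => v ∈ e)).card = Δ := by
    intro v
    have himg : E0.filter (fun e => v ∈ e) =
        (Finset.univ : Finset (Fin Δ)).image
          (fun d : Fin Δ => Stmt9Aux.edge p k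
            (v.2 - ((v.1 : ℕ) : ZMod p) * ((((d : ℕ) + 1 : ℕ)) : ZMod p))
            ((((d : ℕ) + 1 : ℕ)) : ZMod p)) := by
      ext e
      simp only [Finset.mem_filter, Finset.mem_image, Finset.mem_univ, true_and]
      constructor
      · rintro ⟨he, hv⟩
        obtain ⟨a, d, rfl⟩ := (mem_E0 e).mp he
        refine ⟨d, ?_⟩
        rw [Stmt9Aux.mem_edge] at hv
        congr 1
        linear_combination hv
      · rintro ⟨d, rfl⟩
        refine ⟨(mem_E0 _).mpr ⟨_, d, rfl⟩, ?_⟩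
        rw [Stmt9Aux.mem_edge]
        ring
    rw [himg, Finset.card_image_of_injective _ ?_, Finset.card_univ, Fintype.card_fin]
    intro d d' h
    obtain ⟨-, hd⟩ := Stmt9Aux.edge_inj p k hk h
    haveI : NeZero p := ⟨hp.pos.ne'⟩
    have := congrArg ZMod.val hd
    have hd2 := d.2
    have hd'2 := d'.2
    rw [ZMod.val_natCast_of_lt (by omega), ZMod.val_natCast_of_lt (by omega)] at this
    exact Fin.ext (by omega)
  -- linear
  have hlin : ∀ e₁ ∈ E0, ∀ e₂ ∈ E0, e₁ ≠ e₂ → (e₁ ∩ e₂).card ≤ 1 := by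
    intro e₁ h₁ e₂ h₂ hne
    by_contra hcard
    push_neg at hcard
    obtain ⟨u, hu, w, hw, huw⟩ := Finset.one_lt_card.mp hcard
    rw [Finset.mem_inter] at hu hw
    obtain ⟨a, d, rfl⟩ := (mem_E0 e₁).mp h₁
    obtain ⟨a', d', rfl⟩ := (mem_E0 e₂).mp h₂
    obtain ⟨ha, hd⟩ := Stmt9Aux.edge_params_eq p k hkp u w huw hu.1 hu.2 hw.1 hw.2
    exact hne (by rw [ha, hd])
  -- transfer to Fin (k * p)
  have hcard : Fintype.card (Fin k × ZMod p) = k * p := by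
    haveI : NeZero p := ⟨hp.pos.ne'⟩
    simp [ZMod.card]
  let ε : (Fin k × ZMod p) ≃ Fin (k * p) := Fintype.equivFinOfCardEq hcard
  have hεinj : Function.Injective ε := ε.injective
  have hmapinj : Function.Injective (fun e : Finset (Fin k × ZMod p) => e.image ε) :=
    Finset.image_injective hεinj
  refine ⟨k * p, E0.image (fun e => e.image ε), ?_, ?_, ?_, ?_⟩
  · calc k * p ≤ k * (2 * Δ) := Nat.mul_le_mul_left _ hp2
      _ = 2 * k * Δ := by ring
  · intro e' he'
    obtain ⟨e, he, rfl⟩ := Finset.mem_image.mp he'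
    rw [Finset.card_image_of_injective _ hεinj]
    exact hunif e he
  · intro w
    have hfil : (E0.image (fun e => e.image ε)).filter (fun e => w ∈ e) =
        (E0.filter (fun e => ε.symm w ∈ e)).image (fun e => e.image ε) := by
      ext e'
      simp only [Finset.mem_filter, Finset.mem_image]
      constructor
      · rintro ⟨⟨e, he, rfl⟩, hw⟩
        refine ⟨e, ⟨he, ?_⟩, rfl⟩
        obtain ⟨x, hx, hxw⟩ := Finset.mem_image.mp hw
        rwa [← hxw, Equiv.symm_apply_apply]
      · rintro ⟨e, ⟨he, hw⟩, rfl⟩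
        refine ⟨⟨e, he, rfl⟩, ?_⟩
        exact Finset.mem_image.mpr ⟨ε.symm w, hw, Equiv.apply_symm_apply _ _⟩
    rw [hfil, Finset.card_image_of_injective _ hmapinj]
    exact hreg (ε.symm w)
  · intro e₁' h₁' e₂' h₂' hne
    obtain ⟨e₁, h₁, rfl⟩ := Finset.mem_image.mp h₁'
    obtain ⟨e₂, h₂, rfl⟩ := Finset.mem_image.mp h₂'
    rw [← Finset.image_inter _ _ hεinj, Finset.card_image_of_injective _ hεinj]
    exact hlin e₁ h₁ e₂ h₂ (fun h => hne (by rw [h]))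
end
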